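/- For all natural numbers x ≥ 1, e ≥ 0 and real numbers c, d with 0 < c < 32 and 0 < d < 30x, the inequality (1 − d/(30x + c)) < (1 − d/(30(2x+e+1) + c))·(1 − d/(30(2x+e+2) + c)) holds. -/
import Mathlib


theorem stmt_4 (x e : ℕ) (hx : 1 ≤ x) (c d : ℝ) (hc0 : 0 < c) (hc : c < 32)
    (hd0 : 0 < d) (hd : d < 30 * x) :
    (1 - d / (30 * x + c)) <
      (1 - d / (30 * (2 * x + e + 1) + c)) * (1 - d / (30 * (2 * x + e + 2) + c)) := by
  have hx' : (1:ℝ) ≤ (x:ℝ) := by exact_mod_cast hx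
  have he' : (0:ℝ) ≤ (e:ℝ) := Nat.cast_nonneg e
  have hA : (0:ℝ) < 30 * x + c := by nlinarith
  have hB : (0:ℝ) < 30 * (2 * (x:ℝ) + e + 1) + c := by nlinarith
  have hC : (0:ℝ) < 30 * (2 * (x:ℝ) + e + 2) + c := by nlinarith
  have key : (1 - d / (30 * (x:ℝ) + c)) <
      (1 - d / (30 * (2 * (x:ℝ) + e + 1) + c)) * (1 - d / (30 * (2 * (x:ℝ) + e + 2) + c)) := by
    have e1 : 1 - d / (30 * (x:ℝ) + c) = ((30 * (x:ℝ) + c) - d) / (30 * (x:ℝ) + c) := by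
      field_simp
    have e2 : 1 - d / (30 * (2 * (x:ℝ) + e + 1) + c)
        = ((30 * (2 * (x:ℝ) + e + 1) + c) - d) / (30 * (2 * (x:ℝ) + e + 1) + c) := by
      field_simp
    have e3 : 1 - d / (30 * (2 * (x:ℝ) + e + 2) + c)
        = ((30 * (2 * (x:ℝ) + e + 2) + c) - d) / (30 * (2 * (x:ℝ) + e + 2) + c) := by
      field_simp
    rw [e1, e2, e3, div_mul_div_comm, div_lt_div_iff₀ hA (mul_pos hB hC)]
    have hBCA : 0 ≤ (30 * (2 * (x:ℝ) + e + 1) + c) * (30 * (2 * (x:ℝ) + e + 2) + c)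
        - (30 * (x:ℝ) + c) * ((30 * (2 * (x:ℝ) + e + 1) + c) + (30 * (2 * (x:ℝ) + e + 2) + c)) := by
      nlinarith [sq_nonneg ((e:ℝ)), mul_nonneg he' (le_trans zero_le_one hx')]
    nlinarith [mul_nonneg hd0.le hBCA, mul_pos hA (mul_pos hd0 hd0)]
  push_cast
  convert key using 3 <;> push_cast <;> ring
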